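/- (Main Theorem for n-gons, part (ii).) Let n ≥ 3, let v : Fin n → ℂ be a labelling of the vertices of an n-gon, and let X ∈ Fix(v), i.e. X is a point fixed by every symmetry of the n-gon v. Then there exists an n-gon center Z, defined on the family of all labellings Fin n → ℂ, such that Z(v) = X. -/

import Mathlib

noncomputable section

/-- A similarity of the plane: a bijection multiplying all distances by a fixed
positive ratio. -/
def IsSimilarity (f : ℂ → ℂ) : Prop :=
  Function.Bijective f ∧ ∃ r : ℝ, 0 < r ∧
    ∀ z w : ℂ, ‖f z - f w‖ = r * ‖z - w‖

/-- An isometry of the plane: a similarity with ratio 1. -/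
def IsPlaneIsometry (f : ℂ → ℂ) : Prop :=
  Function.Bijective f ∧ ∀ z w : ℂ, ‖f z - f w‖ = ‖z - w‖

/-- `α` is an element of the dihedral subgroup of the permutations of `Fin n`:
`i ↦ i + k` or `i ↦ k - i` (mod `n`). -/
def IsDihedral (n : ℕ) (α : Fin n → Fin n) : Prop :=
  (∃ k : Fin n, ∀ i, α i = i + k) ∨ (∃ k : Fin n, ∀ i, α i = k - i)

/-- `T` is a symmetry of the `n`-gon labelled by `v`: a plane isometry with
`T ∘ v = v ∘ α` for some dihedral relabelling `α`. -/
def IsPolygonSymmetry (n : ℕ) (v : Fin n → ℂ) (T : ℂ → ℂ) : Prop :=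
  IsPlaneIsometry T ∧ ∃ α : Fin n → Fin n, IsDihedral n α ∧ T ∘ v = v ∘ α

/-- The set of points fixed by every symmetry of the `n`-gon labelled by `v`. -/
def FixPolygon (n : ℕ) (v : Fin n → ℂ) : Set ℂ :=
  {x | ∀ T : ℂ → ℂ, IsPolygonSymmetry n v T → T x = x}

section AuxLemmas

variable {n : ℕ} [NeZero n]

lemma dihedral_id : IsDihedral n id := Or.inl ⟨0, by simp⟩

lemma dihedral_bijective {α : Fin n → Fin n} (h : IsDihedral n α) : Function.Bijective α := by
  rcases h with ⟨k, hk⟩ | ⟨k, hk⟩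
  · have : α = fun i => i + k := funext hk
    rw [this]; exact (Equiv.addRight k).bijective
  · have : α = fun i => k - i := funext hk
    rw [this]; exact (Equiv.subLeft k).bijective

lemma dihedral_comp {α β : Fin n → Fin n} (hα : IsDihedral n α) (hβ : IsDihedral n β) :
    IsDihedral n (α ∘ β) := by
  rcases hα with ⟨k, hk⟩ | ⟨k, hk⟩ <;> rcases hβ with ⟨l, hl⟩ | ⟨l, hl⟩
  · exact Or.inl ⟨l + k, fun i => by simp [hk, hl, add_assoc]⟩
  · exact Or.inr ⟨l + k, fun i => by simp only [Function.comp, hk, hl]; abel⟩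
  · exact Or.inr ⟨k - l, fun i => by simp only [Function.comp, hk, hl]; abel⟩
  · exact Or.inl ⟨k - l, fun i => by simp only [Function.comp, hk, hl]; abel⟩

lemma dihedral_inv {α : Fin n → Fin n} (hα : IsDihedral n α) :
    ∃ β, IsDihedral n β ∧ (∀ i, β (α i) = i) ∧ (∀ i, α (β i) = i) := by
  rcases hα with ⟨k, hk⟩ | ⟨k, hk⟩
  · refine ⟨fun i => i + (-k), Or.inl ⟨-k, fun i => rfl⟩, fun i => ?_, fun i => ?_⟩ <;>
      · simp only [hk]; abel
  · refine ⟨α, Or.inr ⟨k, hk⟩, fun i => ?_, fun i => ?_⟩ <;>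
      · simp only [hk]; abel

lemma sim_id : IsSimilarity id := ⟨Function.bijective_id, 1, one_pos, by simp⟩

lemma sim_comp {f g : ℂ → ℂ} (hf : IsSimilarity f) (hg : IsSimilarity g) :
    IsSimilarity (f ∘ g) := by
  obtain ⟨hfb, r, hr, hfd⟩ := hf
  obtain ⟨hgb, s, hs, hgd⟩ := hg
  exact ⟨hfb.comp hgb, r * s, mul_pos hr hs,
    fun z w => by simp only [Function.comp, hfd, hgd, mul_assoc]⟩

lemma sim_inv {f : ℂ → ℂ} (hf : IsSimilarity f) :
    ∃ g, IsSimilarity g ∧ (∀ z, g (f z) = z) ∧ (∀ z, f (g z) = z) := by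
  obtain ⟨hfb, r, hr, hfd⟩ := hf
  let e := Equiv.ofBijective f hfb
  refine ⟨e.symm, ⟨e.symm.bijective, r⁻¹, by positivity, fun z w => ?_⟩,
    fun z => e.symm_apply_apply z, fun z => e.apply_symm_apply z⟩
  have := hfd (e.symm z) (e.symm w)
  rw [show f (e.symm z) = z from e.apply_symm_apply z,
      show f (e.symm w) = w from e.apply_symm_apply w] at this
  field_simp [this]
  rw [this]; ring

lemma sim_affine {f : ℂ → ℂ} (hf : IsSimilarity f) :
    ∃ A : ℂ →ₗ[ℝ] ℂ, ∀ z, f z = A z + f 0 := by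
  obtain ⟨hfb, r, hr, hfd⟩ := hf
  set g : ℂ → ℂ := fun z => (r⁻¹ : ℝ) • (f z - f 0) with hg
  have hgi : Isometry g := by
    refine Isometry.of_dist_eq fun z w => ?_
    simp only [hg, Complex.dist_eq, ← smul_sub, sub_sub_sub_cancel_right]
    rw [norm_smul, hfd]
    rw [Real.norm_eq_abs, abs_of_pos (inv_pos.mpr hr)]
    field_simp
  have hgb : Function.Bijective g := by
    constructor
    · exact hgi.injective
    · intro y
      obtain ⟨z, hz⟩ := hfb.surjective ((r : ℝ) • y + f 0)
      refine ⟨z, ?_⟩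
      rw [hg]
      simp only [hz, add_sub_cancel_right, smul_smul, inv_mul_cancel₀ (ne_of_gt hr), one_smul]
  let e : ℂ ≃ᵢ ℂ := ⟨Equiv.ofBijective g hgb, hgi⟩
  have h0 : e 0 = 0 := by simp [e, Equiv.ofBijective, hg]
  let L := e.toRealLinearIsometryEquivOfMapZero h0
  have hL : ∀ z, L z = g z := fun z => rfl
  refine ⟨(r : ℝ) • (L.toLinearIsometry.toLinearMap), fun z => ?_⟩
  have h1 : (r : ℝ) • L z = f z - f 0 := by
    rw [hL]; show (r:ℝ) • ((r⁻¹ : ℝ) • (f z - f 0)) = _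
    rw [smul_smul, mul_inv_cancel₀ (ne_of_gt hr), one_smul]
  have h2 : ((r : ℝ) • L.toLinearIsometry.toLinearMap) z = (r:ℝ) • L z := rfl
  rw [h2, h1]; ring

noncomputable def centroid (n : ℕ) (w : Fin n → ℂ) : ℂ := (n : ℝ)⁻¹ • ∑ i, w i

omit [NeZero n] in
lemma centroid_comp {w : Fin n → ℂ} {α : Fin n → Fin n} (hα : Function.Bijective α) :
    centroid n (w ∘ α) = centroid n w := by
  unfold centroid
  rw [show ∑ i, (w ∘ α) i = ∑ i, w i from Fintype.sum_bijective α hα _ _ fun i => rfl]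

lemma centroid_sim {w : Fin n → ℂ} {f : ℂ → ℂ} (hf : IsSimilarity f) :
    centroid n (f ∘ w) = f (centroid n w) := by
  obtain ⟨A, hA⟩ := sim_affine hf
  have hn : (n : ℝ) ≠ 0 := Nat.cast_ne_zero.mpr (NeZero.ne n)
  unfold centroid
  have hsum : ∑ i, f (w i) = A (∑ i, w i) + n • f 0 := by
    rw [Finset.sum_congr rfl (fun i _ => hA (w i))]
    rw [Finset.sum_add_distrib, Finset.sum_const, Finset.card_univ, Fintype.card_fin, map_sum]
  calc (n:ℝ)⁻¹ • ∑ i, (f ∘ w) i = (n:ℝ)⁻¹ • (A (∑ i, w i) + n • f 0) := by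
        rw [← hsum]; rfl
    _ = A ((n:ℝ)⁻¹ • ∑ i, w i) + f 0 := by
        rw [smul_add, map_smul, (Nat.cast_smul_eq_nsmul ℝ n (f 0)).symm, smul_smul,
          inv_mul_cancel₀ hn, one_smul]
    _ = f ((n:ℝ)⁻¹ • ∑ i, w i) := (hA _).symm

lemma fix_of_rel {n : ℕ} (hn : 3 ≤ n) (v : Fin n → ℂ) (X : ℂ) (hX : X ∈ FixPolygon n v)
    {g : ℂ → ℂ} (hg : IsSimilarity g) {α : Fin n → Fin n} (hα : IsDihedral n α)
    (h : g ∘ v = v ∘ α) : g X = X := by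
  haveI : NeZero n := ⟨by omega⟩
  have hi : ∀ i, g (v i) = v (α i) := fun i => congrFun h i
  by_cases hc : ∀ i j : Fin n, v i = v j
  · -- constant polygon
    set c := v 0 with hcdef
    have hXc : X = c := by
      have hT : IsPolygonSymmetry n v (fun z => 2*c - z) := by
        refine ⟨⟨⟨fun a b hab => by simpa using hab, fun y => ⟨2*c - y, by ring⟩⟩,
          fun z w => by rw [show 2*c - z - (2*c - w) = -(z - w) by ring, norm_neg]⟩,
          id, dihedral_id, funext fun i => ?_⟩
        show 2 * c - v i = v i
        rw [show v i = c from hc i 0]; ring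
      have h2 := hX _ hT
      change 2 * c - X = X at h2
      linear_combination -h2/2
    rw [hXc]
    have h1 := hi 0
    rw [show v (α 0) = c from hc (α 0) 0] at h1
    exact h1
  · -- nonconstant polygon
    push_neg at hc
    obtain ⟨i0, j0, hij⟩ := hc
    obtain ⟨hgb, r, hr, hd⟩ := hg
    have hne : (Finset.univ : Finset (Fin n × Fin n)).Nonempty := Finset.univ_nonempty
    set D : Fin n × Fin n → ℝ := fun p => ‖v p.1 - v p.2‖ with hD
    set d := Finset.univ.sup' hne D with hdd
    have hdpos : 0 < d := by
      have h1 : 0 < D (i0, j0) := by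
        simp only [hD]
        exact norm_pos_iff.mpr (sub_ne_zero.mpr hij)
      exact lt_of_lt_of_le h1 (Finset.le_sup' D (Finset.mem_univ (i0, j0)))
    have hsc : ∀ p : Fin n × Fin n, D (α p.1, α p.2) = r * D p := by
      intro p
      simp only [hD, ← hi]
      exact hd _ _
    have h1 : r * d ≤ d := by
      obtain ⟨p, -, hp⟩ := Finset.exists_mem_eq_sup' hne D
      calc r * d = D (α p.1, α p.2) := by rw [hsc, ← hp]
        _ ≤ d := Finset.le_sup' D (Finset.mem_univ _)
    have h2 : d ≤ r * d := by
      obtain ⟨q, -, hq⟩ := Finset.exists_mem_eq_sup' hne D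
      obtain ⟨p1, hp1⟩ := (dihedral_bijective hα).surjective q.1
      obtain ⟨p2, hp2⟩ := (dihedral_bijective hα).surjective q.2
      have hqd : D q = r * D (p1, p2) := by
        have h3 := hsc (p1, p2)
        rw [hp1, hp2] at h3
        simpa using h3
      have hle : D (p1, p2) ≤ d := Finset.le_sup' D (Finset.mem_univ _)
      calc d = r * D (p1, p2) := by rw [hdd, hq, hqd]
        _ ≤ r * d := by nlinarith
    have hr1 : r = 1 := by nlinarith
    exact hX g ⟨⟨hgb, fun z w => by rw [hd, hr1, one_mul]⟩, α, hα, h⟩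

end AuxLemmas

/-- Main theorem for `n`-gons, part (ii): every point `X` fixed by the group of
symmetries of the `n`-gon `v` is the value at `v` of some `n`-gon center `Z`
defined on all labellings. -/
theorem stmt15 (n : ℕ) (hn : 3 ≤ n) (v : Fin n → ℂ) (X : ℂ)
    (hX : X ∈ FixPolygon n v) :
    ∃ Z : (Fin n → ℂ) → ℂ,
      (∀ (w : Fin n → ℂ) (α : Fin n → Fin n), IsDihedral n α → Z (w ∘ α) = Z w) ∧
      (∀ (w : Fin n → ℂ) (f : ℂ → ℂ), IsSimilarity f → Z (f ∘ w) = f (Z w)) ∧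
      Z v = X := by
  haveI : NeZero n := ⟨by omega⟩
  classical
  set P : (Fin n → ℂ) → Prop :=
    fun w => ∃ f : ℂ → ℂ, ∃ α : Fin n → Fin n,
      IsSimilarity f ∧ IsDihedral n α ∧ w = f ∘ v ∘ α with hPdef
  set Z : (Fin n → ℂ) → ℂ :=
    fun w => if h : P w then h.choose X else centroid n w with hZdef
  -- well-definedness on the orbit of v
  have wd : ∀ (w : Fin n → ℂ) (f : ℂ → ℂ) (α : Fin n → Fin n),
      IsSimilarity f → IsDihedral n α → w = f ∘ v ∘ α → Z w = f X := by
    intro w f α hf hα hw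
    have hPw : P w := ⟨f, α, hf, hα, hw⟩
    have hZw : Z w = hPw.choose X := by
      rw [hZdef]; exact dif_pos hPw
    obtain ⟨α₂, hf₂, hα₂, hw₂⟩ := hPw.choose_spec
    set f₂ := hPw.choose with hf₂def
    rw [hZw]
    -- it suffices to show f₂ X = f X
    obtain ⟨β, hβ, hβ1, hβ2⟩ := dihedral_inv hα
    obtain ⟨g, hgS, hg1, hg2⟩ := sim_inv hf₂
    have hp : ∀ i, f (v (α i)) = f₂ (v (α₂ i)) :=
      fun i => (congrFun hw i).symm.trans (congrFun hw₂ i)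
    have hcomp : (g ∘ f) ∘ v = v ∘ (α₂ ∘ β) := by
      funext i
      have h1 := hp (β i)
      rw [hβ2 i] at h1
      show g (f (v i)) = v (α₂ (β i))
      rw [h1, hg1]
    have hgf : (g ∘ f) X = X :=
      fix_of_rel hn v X hX (sim_comp hgS hf) (dihedral_comp hα₂ hβ) hcomp
    have : g (f X) = X := hgf
    calc f₂ X = f₂ (g (f X)) := by rw [this]
      _ = f X := hg2 _
  refine ⟨Z, ?_, ?_, ?_⟩
  · -- dihedral invariance
    intro w α hα
    by_cases hw : P w
    · obtain ⟨f, β, hf, hβ, hww⟩ := hw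
      have h1 : w ∘ α = f ∘ v ∘ (β ∘ α) := by
        funext i; exact congrFun hww (α i)
      rw [wd _ f (β ∘ α) hf (dihedral_comp hβ hα) h1, wd w f β hf hβ hww]
    · obtain ⟨α', hα', hα'1, hα'2⟩ := dihedral_inv hα
      have hw2 : ¬ P (w ∘ α) := by
        rintro ⟨f, β, hf, hβ, hww⟩
        refine hw ⟨f, β ∘ α', hf, dihedral_comp hβ hα', funext fun i => ?_⟩
        have := congrFun hww (α' i)
        simp only [Function.comp] at this ⊢
        rw [← this, hα'2]
      rw [hZdef]
      simp only [dif_neg hw, dif_neg hw2]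
      exact centroid_comp (dihedral_bijective hα)
  · -- similarity equivariance
    intro w f hf
    by_cases hw : P w
    · obtain ⟨g, β, hg, hβ, hww⟩ := hw
      have h1 : f ∘ w = (f ∘ g) ∘ v ∘ β := by
        funext i; exact congrArg f (congrFun hww i)
      rw [wd _ (f ∘ g) β (sim_comp hf hg) hβ h1, wd w g β hg hβ hww]
      rfl
    · obtain ⟨f', hf', hf'1, hf'2⟩ := sim_inv hf
      have hw2 : ¬ P (f ∘ w) := by
        rintro ⟨g, β, hg, hβ, hww⟩
        refine hw ⟨f' ∘ g, β, sim_comp hf' hg, hβ, funext fun i => ?_⟩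
        have := congrFun hww i
        simp only [Function.comp] at this ⊢
        rw [← this, hf'1]
      rw [hZdef]
      simp only [dif_neg hw, dif_neg hw2]
      exact centroid_sim hf
  · -- Z v = X
    have : v = id ∘ v ∘ id := rfl
    rw [wd v id id sim_id dihedral_id this]
    rfl
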